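/- Let x be a bounded random vector in ℝ^d with E[xxᵀ] = C, and let Ĉ = (1/n)∑_{i=1}^n x_i x_iᵀ where x_1,...,x_n are i.i.d. copies of x. Then for any fixed λ > 0, E[d_λ(Ĉ)] ≤ 2 d_λ(C). -/

import Mathlib

open Matrix MeasureTheory ProbabilityTheory
namespace EffDimAux

variable {m : Type*} [Fintype m] [DecidableEq m]

lemma trace_nonneg {A : Matrix m m ℝ} (hA : A.PosSemidef) : 0 ≤ A.trace := by
  rw [Matrix.trace]
  refine Finset.sum_nonneg fun i _ => ?_
  have := hA.dotProduct_mulVec_nonneg (Pi.single i 1)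
  simpa using this

lemma trace_mul_nonneg {A B : Matrix m m ℝ} (hA : A.PosSemidef) (hB : B.PosSemidef) :
    0 ≤ (A * B).trace := by
  obtain ⟨S, rfl⟩ : ∃ S : Matrix m m ℝ, A = Sᵀ * S := by
    open MatrixOrder in
    obtain ⟨B, hB⟩ := CStarAlgebra.nonneg_iff_eq_star_mul_self.mp hA.nonneg
    exact ⟨B, by rw [hB, Matrix.star_eq_conjTranspose, Matrix.conjTranspose_eq_transpose_of_trivial]⟩
  rw [Matrix.mul_assoc, Matrix.trace_mul_comm]
  exact trace_nonneg (by simpa [Matrix.mul_assoc] using hB.mul_mul_conjTranspose_same S)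

lemma inv_sub_inv_psd {P Q : Matrix m m ℝ} (hP : P.PosDef) (hQ : Q.PosDef)
    (hPQ : (Q - P).PosSemidef) : (P⁻¹ - Q⁻¹).PosSemidef := by
  have hPd : IsUnit P.det := hP.det_pos.ne'.isUnit
  have hQd : IsUnit Q.det := hQ.det_pos.ne'.isUnit
  have hPP : P * P⁻¹ = 1 := Matrix.mul_nonsing_inv _ hPd
  have hQQ : Q * Q⁻¹ = 1 := Matrix.mul_nonsing_inv _ hQd
  have key : P⁻¹ - Q⁻¹ = Q⁻¹ * ((Q - P) + (Q - P) * P⁻¹ * (Q - P)) * Q⁻¹ := by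
    have h1 : (Q - P) + (Q - P) * P⁻¹ * (Q - P) = Q * P⁻¹ * Q - Q := by
      simp only [Matrix.sub_mul, Matrix.mul_sub, hPP, Matrix.one_mul,
        Matrix.nonsing_inv_mul_cancel_right _ _ hPd]
      abel
    rw [h1]
    simp only [Matrix.mul_sub, Matrix.sub_mul, Matrix.mul_assoc, hQQ, Matrix.mul_one,
      Matrix.nonsing_inv_mul_cancel_left _ _ hQd]
  rw [key]
  have hD : ((Q - P) + (Q - P) * P⁻¹ * (Q - P)).PosSemidef := by
    refine hPQ.add ?_
    have := (hP.posSemidef.inv).conjTranspose_mul_mul_same (Q - P)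
    rwa [hPQ.isHermitian.eq] at this
  have := hD.mul_mul_conjTranspose_same Q⁻¹
  rwa [hQ.isHermitian.inv.eq] at this

lemma smul_one_posDef {l : ℝ} (hl : 0 < l) : (l • (1 : Matrix m m ℝ)).PosDef := by
  rw [Matrix.smul_one_eq_diagonal]
  exact Matrix.PosDef.diagonal fun _ => hl

lemma trace_le_of_psd_sub {X Y : Matrix m m ℝ} (h : (Y - X).PosSemidef) :
    X.trace ≤ Y.trace := by
  have := trace_nonneg h
  rw [Matrix.trace_sub] at this
  linarith

lemma trace_mul_le_of_psd_sub {A X Y : Matrix m m ℝ} (hA : A.PosSemidef)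
    (h : (Y - X).PosSemidef) : (A * X).trace ≤ (A * Y).trace := by
  have := trace_mul_nonneg hA h
  rw [Matrix.mul_sub, Matrix.trace_sub] at this
  linarith

lemma effdim_pointwise {A B : Matrix m m ℝ} (hA : A.PosSemidef) (hB : B.PosSemidef)
    {l : ℝ} (hl : 0 < l) :
    (A * (A + l • (1 : Matrix m m ℝ))⁻¹).trace
      ≤ (A * (B + l • (1 : Matrix m m ℝ))⁻¹).trace
        + (B * (B + l • (1 : Matrix m m ℝ))⁻¹).trace := by
  set L := l • (1 : Matrix m m ℝ) with hLdef
  have hL : L.PosDef := smul_one_posDef hl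
  have hAL : (A + L).PosDef := Matrix.PosDef.posSemidef_add hA hL
  have hBL : (B + L).PosDef := Matrix.PosDef.posSemidef_add hB hL
  have hABL : (A + B + L).PosDef := Matrix.PosDef.posSemidef_add (hA.add hB) hL
  have hid : ∀ (M : Matrix m m ℝ), (M + L).PosDef →
      (M * (M + L)⁻¹).trace = (1 : Matrix m m ℝ).trace - l * ((M + L)⁻¹).trace := by
    intro M hM
    have h1 : M * (M + L)⁻¹ = 1 - l • (M + L)⁻¹ := by
      have h2 : M * (M + L)⁻¹ = (M + L) * (M + L)⁻¹ - L * (M + L)⁻¹ := by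
        rw [← Matrix.sub_mul, add_sub_cancel_right]
      rw [h2, Matrix.mul_nonsing_inv _ hM.det_pos.ne'.isUnit, hLdef, Matrix.smul_mul,
        Matrix.one_mul]
    rw [h1, Matrix.trace_sub, Matrix.trace_smul, smul_eq_mul]
  have step1 : (A * (A + L)⁻¹).trace ≤ ((A + B) * (A + B + L)⁻¹).trace := by
    rw [hid A hAL, hid (A + B) hABL]
    have hsub : ((A + L)⁻¹ - (A + B + L)⁻¹).PosSemidef := by
      refine inv_sub_inv_psd hAL hABL ?_
      have h3 : A + B + L - (A + L) = B := by abel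
      rw [h3]; exact hB
    have := trace_le_of_psd_sub hsub
    nlinarith [this, hl.le]
  have step2 : ((A + B) * (A + B + L)⁻¹).trace
      = (A * (A + B + L)⁻¹).trace + (B * (A + B + L)⁻¹).trace := by
    rw [Matrix.add_mul, Matrix.trace_add]
  have step3 : (A * (A + B + L)⁻¹).trace ≤ (A * (B + L)⁻¹).trace := by
    refine trace_mul_le_of_psd_sub hA (inv_sub_inv_psd hBL hABL ?_)
    have h3 : A + B + L - (B + L) = A := by abel
    rw [h3]; exact hA
  have step4 : (B * (A + B + L)⁻¹).trace ≤ (B * (B + L)⁻¹).trace := by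
    refine trace_mul_le_of_psd_sub hB (inv_sub_inv_psd hBL hABL ?_)
    have h3 : A + B + L - (B + L) = A := by abel
    rw [h3]; exact hA
  linarith

lemma posSemidef_vecMulVec (v : m → ℝ) : (Matrix.vecMulVec v v).PosSemidef := by
  refine Matrix.PosSemidef.of_dotProduct_mulVec_nonneg ?_ ?_
  · ext i j
    simp [Matrix.vecMulVec_apply, mul_comm]
  · intro y
    have expand : (star y) ⬝ᵥ (Matrix.vecMulVec v v *ᵥ y) = (∑ j, v j * y j) ^ 2 := by
      rw [sq, Finset.sum_mul_sum]
      simp only [dotProduct, Matrix.mulVec, Matrix.vecMulVec_apply, Pi.star_apply,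
        star_trivial, Finset.mul_sum]
      exact Finset.sum_congr rfl fun i _ => Finset.sum_congr rfl fun j _ => by ring
    rw [expand]
    positivity

omit [DecidableEq m] in
lemma posSemidef_smul {A : Matrix m m ℝ} (hA : A.PosSemidef) {c : ℝ} (hc : 0 ≤ c) :
    (c • A).PosSemidef := by
  refine Matrix.PosSemidef.of_dotProduct_mulVec_nonneg ?_ ?_
  · ext i j
    have := congrFun (congrFun hA.1 i) j
    simp only [Matrix.conjTranspose_apply, star_trivial] at this ⊢
    simp [Matrix.smul_apply, this]
  · intro y
    have := hA.dotProduct_mulVec_nonneg y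
    simp only [Matrix.smul_mulVec, dotProduct_smul, smul_eq_mul]
    positivity

end EffDimAux


/-- For i.i.d. bounded random vectors with second-moment matrix `C`, the
expected effective dimension of the empirical covariance matrix
`Ĉ = (1/n)∑ xᵢxᵢᵀ` is at most twice the effective dimension of `C`, where
`d_λ(M) = tr(M(M+λI)⁻¹)`. -/
theorem expected_empirical_effective_dimension_le
    {d n : ℕ} (hn : 0 < n)
    {Ω : Type*} [MeasurableSpace Ω] (μ : Measure Ω) [IsProbabilityMeasure μ]
    (x : Fin n → Ω → (Fin d → ℝ)) (hmeas : ∀ i, Measurable (x i))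
    (hindep : iIndepFun x μ)
    (hident : ∀ i j, IdentDistrib (x i) (x j) μ μ)
    (R : ℝ) (hbound : ∀ i ω j, |x i ω j| ≤ R)
    (C : Matrix (Fin d) (Fin d) ℝ)
    (hC : ∀ i j k, ∫ ω, x i ω j * x i ω k ∂μ = C j k)
    (l : ℝ) (hl : 0 < l) :
    ∫ ω, (((n : ℝ)⁻¹ • ∑ i : Fin n, vecMulVec (x i ω) (x i ω)) *
        (((n : ℝ)⁻¹ • ∑ i : Fin n, vecMulVec (x i ω) (x i ω))
          + l • (1 : Matrix (Fin d) (Fin d) ℝ))⁻¹).trace ∂μ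
      ≤ 2 * (C * (C + l • (1 : Matrix (Fin d) (Fin d) ℝ))⁻¹).trace := by
  classical
  set L : Matrix (Fin d) (Fin d) ℝ := l • 1 with hLdef
  set M : Ω → Matrix (Fin d) (Fin d) ℝ :=
    fun ω => (n : ℝ)⁻¹ • ∑ i : Fin n, vecMulVec (x i ω) (x i ω) with hMdef
  set D : Matrix (Fin d) (Fin d) ℝ := (C + L)⁻¹ with hDdef
  have i0 : Fin n := ⟨0, hn⟩
  have hnne : (n : ℝ) ≠ 0 := Nat.cast_ne_zero.mpr hn.ne'
  -- integrability of entry products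
  have hR2 : ∀ (i : Fin n) (p k : Fin d), Integrable (fun ω => x i ω p * x i ω k) μ := by
    intro i p k
    have hm : Measurable fun ω => x i ω p * x i ω k :=
      ((measurable_pi_apply p).comp (hmeas i)).mul ((measurable_pi_apply k).comp (hmeas i))
    refine (integrable_const (|R| * |R|)).mono' hm.aestronglyMeasurable ?_
    filter_upwards with ω
    rw [Real.norm_eq_abs, abs_mul]
    exact mul_le_mul ((hbound i ω p).trans (le_abs_self R))
      ((hbound i ω k).trans (le_abs_self R)) (abs_nonneg _) (abs_nonneg _)
  -- M ω is PSD
  have hMpsd : ∀ ω, (M ω).PosSemidef := by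
    intro ω
    refine EffDimAux.posSemidef_smul ?_ (by positivity)
    exact Finset.sum_induction _ _ (fun a b ha hb => ha.add hb) Matrix.PosSemidef.zero
      (fun i _ => EffDimAux.posSemidef_vecMulVec _)
  -- C is PSD
  have hCpsd : C.PosSemidef := by
    refine Matrix.PosSemidef.of_dotProduct_mulVec_nonneg ?_ ?_
    · ext p k
      simp only [Matrix.conjTranspose_apply, star_trivial]
      rw [← hC i0 k p, ← hC i0 p k]
      congr 1; funext ω; ring
    · intro v
      have h1 : ∀ ω, (∑ j, v j * x i0 ω j) ^ 2
          = ∑ j, ∑ k, (v j * v k) * (x i0 ω j * x i0 ω k) := by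
        intro ω
        rw [sq, Finset.sum_mul_sum]
        exact Finset.sum_congr rfl fun j _ => Finset.sum_congr rfl fun k _ => by ring
      have h2 : star v ⬝ᵥ C *ᵥ v = ∫ ω, (∑ j, v j * x i0 ω j) ^ 2 ∂μ := by
        calc star v ⬝ᵥ C *ᵥ v = ∑ j, ∑ k, (v j * v k) * C j k := by
              simp only [dotProduct, Matrix.mulVec, Pi.star_apply, star_trivial,
                Finset.mul_sum]
              exact Finset.sum_congr rfl fun j _ => Finset.sum_congr rfl fun k _ => by ring
          _ = ∑ j, ∑ k, ∫ ω, (v j * v k) * (x i0 ω j * x i0 ω k) ∂μ := by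
              refine Finset.sum_congr rfl fun j _ => Finset.sum_congr rfl fun k _ => ?_
              rw [integral_const_mul, hC]
          _ = ∑ j, ∫ ω, ∑ k, (v j * v k) * (x i0 ω j * x i0 ω k) ∂μ := by
              refine Finset.sum_congr rfl fun j _ => ?_
              rw [integral_finset_sum _ fun k _ => (hR2 i0 j k).const_mul _]
          _ = ∫ ω, ∑ j, ∑ k, (v j * v k) * (x i0 ω j * x i0 ω k) ∂μ := by
              rw [integral_finset_sum _ fun j _ =>
                integrable_finset_sum _ fun k _ => (hR2 i0 j k).const_mul _]
          _ = ∫ ω, (∑ j, v j * x i0 ω j) ^ 2 ∂μ := by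
              congr 1; funext ω; rw [h1]
      rw [h2]
      exact integral_nonneg fun ω => sq_nonneg _
  -- L and C + L are positive definite
  have hLpd : L.PosDef := EffDimAux.smul_one_posDef hl
  -- trace formula for M ω times a constant matrix
  have htr : ∀ (ω : Ω) (E : Matrix (Fin d) (Fin d) ℝ), (M ω * E).trace
      = ∑ p, ∑ k, (n : ℝ)⁻¹ * ((∑ i : Fin n, x i ω p * x i ω k) * E k p) := by
    intro ω E
    simp only [Matrix.trace, Matrix.diag_apply, Matrix.mul_apply, hMdef, Matrix.smul_apply,
      Matrix.sum_apply, Matrix.vecMulVec_apply, smul_eq_mul]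
    exact Finset.sum_congr rfl fun p _ => Finset.sum_congr rfl fun k _ => by ring
  -- integrability of ω ↦ tr(M ω * D)
  have hg1 : Integrable (fun ω => (M ω * D).trace) μ := by
    have heq : (fun ω => (M ω * D).trace)
        = fun ω => ∑ p, ∑ k, (n : ℝ)⁻¹ * ((∑ i : Fin n, x i ω p * x i ω k) * D k p) := by
      funext ω; exact htr ω D
    rw [heq]
    refine integrable_finset_sum _ fun p _ => integrable_finset_sum _ fun k _ => ?_
    exact (((integrable_finset_sum _ fun i _ => hR2 i p k).mul_const _).const_mul _)
  -- expected value of tr(M ω * D)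
  have hint1 : ∫ ω, (M ω * D).trace ∂μ = (C * D).trace := by
    have heq : (fun ω => (M ω * D).trace)
        = fun ω => ∑ p, ∑ k, (n : ℝ)⁻¹ * ((∑ i : Fin n, x i ω p * x i ω k) * D k p) := by
      funext ω; exact htr ω D
    rw [heq, integral_finset_sum _ fun p _ => integrable_finset_sum _ fun k _ =>
      ((integrable_finset_sum _ fun i _ => hR2 i p k).mul_const _).const_mul _]
    have : ∀ p, ∫ ω, ∑ k, (n : ℝ)⁻¹ * ((∑ i : Fin n, x i ω p * x i ω k) * D k p) ∂μ
        = ∑ k, C p k * D k p := by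
      intro p
      rw [integral_finset_sum _ fun k _ =>
        ((integrable_finset_sum _ fun i _ => hR2 i p k).mul_const _).const_mul _]
      refine Finset.sum_congr rfl fun k _ => ?_
      rw [integral_const_mul, integral_mul_const,
        integral_finset_sum _ fun i _ => hR2 i p k]
      simp only [hC]
      rw [Finset.sum_const, Finset.card_fin, nsmul_eq_mul]
      field_simp
    rw [Finset.sum_congr rfl fun p _ => this p]
    simp only [Matrix.trace, Matrix.diag_apply, Matrix.mul_apply]
  -- pointwise bound and nonnegativity
  have hptw : ∀ ω, (M ω * (M ω + L)⁻¹).trace ≤ (M ω * D).trace + (C * D).trace :=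
    fun ω => EffDimAux.effdim_pointwise (hMpsd ω) hCpsd hl
  have hnn : ∀ ω, 0 ≤ (M ω * (M ω + L)⁻¹).trace := fun ω =>
    EffDimAux.trace_mul_nonneg (hMpsd ω)
      ((Matrix.PosDef.posSemidef_add (hMpsd ω) hLpd).posSemidef.inv)
  calc ∫ ω, (M ω * (M ω + L)⁻¹).trace ∂μ
      ≤ ∫ ω, ((M ω * D).trace + (C * D).trace) ∂μ := by
        refine integral_mono_of_nonneg (Filter.Eventually.of_forall hnn)
          (hg1.add (integrable_const _)) (Filter.Eventually.of_forall hptw)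
    _ = (C * D).trace + (C * D).trace := by
        rw [integral_add hg1 (integrable_const _), hint1, integral_const]
        simp
    _ = 2 * (C * D).trace := by ring
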